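/- Let F be a field and let L be a ℤ-graded Lie algebra over F such that (a) the subalgebra ⊕_{i>0} L_i is generated as a Lie algebra by L_1, and (b) the only ideal of L contained in ⊕_{i<0} L_i is zero. Then for every integer s ≥ 1, every x ∈ L_{-s} with [x, L_1] = 0 is zero. -/

import Mathlib

section AuxAdWord

variable {F L : Type*} [Field F] [LieRing L] [LieAlgebra F L]

/-- Iterated bracketing: `adWord [u₁, …, u_k] m = ⁅u₁, ⁅u₂, …, ⁅u_k, m⁆…⁆⁆`. -/
def adWord (l : List L) (m : L) : L := l.foldr (fun u v => ⁅u, v⁆) m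

lemma adWord_nil (m : L) : adWord ([] : List L) m = m := rfl

lemma adWord_cons (u : L) (l : List L) (m : L) :
    adWord (u :: l) m = ⁅u, adWord l m⁆ := rfl

lemma adWord_concat (l : List L) (u m : L) :
    adWord (l ++ [u]) m = adWord l ⁅u, m⁆ := by
  simp [adWord, List.foldr_append]

lemma adWord_add (l : List L) (a b : L) :
    adWord l (a + b) = adWord l a + adWord l b := by
  induction l with
  | nil => rfl
  | cons u l ih => simp [adWord_cons, ih, lie_add]

lemma adWord_smul (l : List L) (c : F) (a : L) :
    adWord l (c • a) = c • adWord l a := by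
  induction l with
  | nil => rfl
  | cons u l ih => simp [adWord_cons, ih, lie_smul]

lemma adWord_zero (l : List L) : adWord l (0 : L) = 0 := by
  induction l with
  | nil => rfl
  | cons u l ih => simp [adWord_cons, ih]

end AuxAdWord

/-- Let `F` be a field and let `L` be a `ℤ`-graded Lie algebra over `F` such
that (a) the subalgebra `⊕_{i>0} Lᵢ` is generated as a Lie algebra by `L₁`, and (b) the only ideal
of `L` contained in `⊕_{i<0} Lᵢ` is zero.  Then for every integer `s ≥ 1`, every `x ∈ L₋ₛ` with
`[x, L₁] = 0` is zero. -/
theorem stmt_10 {F L : Type*} [Field F] [LieRing L] [LieAlgebra F L]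
    (Lgr : ℤ → Submodule F L)
    (hdirect : DirectSum.IsInternal Lgr)
    (hbracket : ∀ i j : ℤ, ∀ x ∈ Lgr i, ∀ y ∈ Lgr j, ⁅x, y⁆ ∈ Lgr (i + j))
    (hgenpos : (LieSubalgebra.lieSpan F L (Lgr 1 : Set L)).toSubmodule = ⨆ i > (0 : ℤ), Lgr i)
    (hrad : ∀ J : LieIdeal F L, (J : Submodule F L) ≤ ⨆ i < (0 : ℤ), Lgr i → J = ⊥) :
    ∀ s : ℤ, 1 ≤ s → ∀ x ∈ Lgr (-s), (∀ y ∈ Lgr 1, ⁅x, y⁆ = 0) → x = 0 := by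
  intro s hs x hx hxcomm
  set M : Submodule F L := ⨆ i < (0 : ℤ), Lgr i with hMdef
  have hMgr : ∀ i : ℤ, i < 0 → Lgr i ≤ M := by
    intro i hi
    exact le_iSup₂ (f := fun i (_ : i < (0:ℤ)) => Lgr i) i hi
  -- bracketing with a homogeneous element of degree ≤ 0 preserves M
  have hadM : ∀ j : ℤ, j ≤ 0 → ∀ z ∈ Lgr j, ∀ m ∈ M, ⁅z, m⁆ ∈ M := by
    intro j hj z hz m hm
    refine Submodule.iSup_induction (fun i => ⨆ _ : i < (0:ℤ), Lgr i)
      (motive := fun m => ⁅z, m⁆ ∈ M) hm ?_ (by simp only [lie_zero]; exact M.zero_mem) ?_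
    · intro i y hy
      by_cases hi : i < 0
      · rw [iSup_pos hi] at hy
        exact hMgr (j + i) (by omega) (hbracket j i z hz y hy)
      · rw [iSup_neg hi] at hy
        have : y = 0 := by simpa using hy
        simp only [this, lie_zero]
        exact M.zero_mem
    · intro a b ha hb
      simp only [lie_add]; exact M.add_mem ha hb
  -- the candidate ideal, as a submodule
  let Jcar : Submodule F L :=
    { carrier := {m | m ∈ M ∧ ∀ l : List L, (∀ u ∈ l, u ∈ Lgr 1) → adWord l m ∈ M}
      add_mem' := by
        rintro a b ⟨haM, haW⟩ ⟨hbM, hbW⟩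
        exact ⟨M.add_mem haM hbM, fun l hl => by
          rw [adWord_add]; exact M.add_mem (haW l hl) (hbW l hl)⟩
      zero_mem' := ⟨M.zero_mem, fun l _ => by rw [adWord_zero]; exact M.zero_mem⟩
      smul_mem' := by
        rintro c a ⟨haM, haW⟩
        exact ⟨M.smul_mem c haM, fun l hl => by
          rw [adWord_smul]; exact M.smul_mem c (haW l hl)⟩ }
  have memJ : ∀ m : L, m ∈ Jcar ↔
      (m ∈ M ∧ ∀ l : List L, (∀ u ∈ l, u ∈ Lgr 1) → adWord l m ∈ M) := fun m => Iff.rfl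
  -- bracketing by elements of L₁ preserves Jcar
  have hJ1 : ∀ u ∈ Lgr 1, ∀ m ∈ Jcar, ⁅u, m⁆ ∈ Jcar := by
    intro u hu m hm
    obtain ⟨hmM, hmW⟩ := (memJ m).mp hm
    refine (memJ _).mpr ⟨?_, ?_⟩
    · have := hmW [u] (by simpa using hu)
      simpa [adWord_cons, adWord_nil] using this
    · intro l hl
      rw [← adWord_concat]
      exact hmW (l ++ [u]) (by
        intro v hv
        rcases List.mem_append.mp hv with h | h
        · exact hl v h
        · simpa using List.mem_singleton.mp h ▸ hu)
  -- the key induction: words applied to ⁅z, m⁆, z homogeneous of degree ≤ 0, land in M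
  have hhard : ∀ l : List L, (∀ u ∈ l, u ∈ Lgr 1) →
      ∀ j : ℤ, j ≤ 0 → ∀ z ∈ Lgr j, ∀ m ∈ Jcar, adWord l ⁅z, m⁆ ∈ M := by
    intro l
    induction l using List.reverseRecOn with
    | nil =>
      intro _ j hj z hz m hm
      rw [adWord_nil]
      exact hadM j hj z hz m ((memJ m).mp hm).1
    | append_singleton l u ih =>
      intro hl j hj z hz m hm
      have hu : u ∈ Lgr 1 := hl u (by simp)
      have hl' : ∀ v ∈ l, v ∈ Lgr 1 := fun v hv => hl v (by simp [hv])
      rw [adWord_concat]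
      have key : ⁅u, ⁅z, m⁆⁆ = ⁅⁅u, z⁆, m⁆ + ⁅z, ⁅u, m⁆⁆ := leibniz_lie u z m
      rw [key, adWord_add]
      have hz' : ⁅u, z⁆ ∈ Lgr (1 + j) := hbracket 1 j u hu z hz
      have t1 : adWord l ⁅⁅u, z⁆, m⁆ ∈ M := by
        rcases lt_or_eq_of_le hj with hj' | hj'
        · exact ih hl' (1 + j) (by omega) ⁅u, z⁆ hz' m hm
        · have h1 : ⁅u, z⁆ ∈ Lgr 1 := by
            have : (1 : ℤ) + j = 1 := by omega
            rwa [this] at hz'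
          rw [← adWord_concat]
          exact ((memJ m).mp hm).2 (l ++ [⁅u, z⁆]) (by
            intro v hv
            rcases List.mem_append.mp hv with h | h
            · exact hl' v h
            · simpa using List.mem_singleton.mp h ▸ h1)
      have t2 : adWord l ⁅z, ⁅u, m⁆⁆ ∈ M :=
        ih hl' j hj z hz ⁅u, m⁆ (hJ1 u hu m hm)
      exact M.add_mem t1 t2
  -- bracketing by homogeneous elements of degree ≤ 0 preserves Jcar
  have hJneg : ∀ j : ℤ, j ≤ 0 → ∀ z ∈ Lgr j, ∀ m ∈ Jcar, ⁅z, m⁆ ∈ Jcar := by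
    intro j hj z hz m hm
    refine (memJ _).mpr ⟨hadM j hj z hz m ((memJ m).mp hm).1, ?_⟩
    intro l hl
    exact hhard l hl j hj z hz m hm
  -- bracketing by elements of the Lie span of L₁ preserves Jcar
  have hJspan : ∀ y ∈ LieSubalgebra.lieSpan F L (Lgr 1 : Set L), ∀ m ∈ Jcar, ⁅y, m⁆ ∈ Jcar := by
    let S : LieSubalgebra F L :=
      { carrier := {y | ∀ m ∈ Jcar, ⁅y, m⁆ ∈ Jcar}
        add_mem' := fun {a b} ha hb m hm => by
          rw [add_lie]; exact Jcar.add_mem (ha m hm) (hb m hm)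
        zero_mem' := fun m hm => by rw [zero_lie]; exact Jcar.zero_mem
        smul_mem' := fun c a ha m hm => by
          rw [smul_lie]; exact Jcar.smul_mem c (ha m hm)
        lie_mem' := fun {a b} ha hb m hm => by
          rw [lie_lie]
          exact Jcar.sub_mem (ha _ (hb m hm)) (hb _ (ha m hm)) }
    have hsub : (Lgr 1 : Set L) ⊆ S := fun u hu m hm => hJ1 u hu m hm
    intro y hy
    exact LieSubalgebra.lieSpan_le.mpr hsub hy
  -- Jcar is a Lie ideal
  have hlie : ∀ (y m : L), m ∈ Jcar → ⁅y, m⁆ ∈ Jcar := by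
    intro y m hm
    have hy : y ∈ ⨆ i, Lgr i := by
      rw [hdirect.submodule_iSup_eq_top]; trivial
    refine Submodule.iSup_induction Lgr (motive := fun y => ⁅y, m⁆ ∈ Jcar) hy ?_ ?_ ?_
    · intro i z hz
      rcases le_or_gt i 0 with hi | hi
      · exact hJneg i hi z hz m hm
      · have : z ∈ (LieSubalgebra.lieSpan F L (Lgr 1 : Set L)).toSubmodule := by
          rw [hgenpos]
          exact le_iSup₂ (f := fun i (_ : i > (0:ℤ)) => Lgr i) i hi hz
        exact hJspan z this m hm
    · simp only [zero_lie]; exact Jcar.zero_mem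
    · intro a b ha hb
      simp only [add_lie]; exact Jcar.add_mem ha hb
  let J : LieIdeal F L := { Jcar with lie_mem := fun {y m} hm => hlie y m hm }
  have hJM : (J : Submodule F L) ≤ M := fun m hm => ((memJ m).mp hm).1
  have hJbot : J = ⊥ := hrad J hJM
  -- x belongs to J
  have hxJ : x ∈ Jcar := by
    refine (memJ x).mpr ⟨hMgr (-s) (by omega) hx, ?_⟩
    intro l hl
    induction l using List.reverseRecOn with
    | nil => rw [adWord_nil]; exact hMgr (-s) (by omega) hx
    | append_singleton l u _ =>
      have hu : u ∈ Lgr 1 := hl u (by simp)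
      have : ⁅u, x⁆ = 0 := by
        have := hxcomm u hu
        rw [← lie_skew, this, neg_zero]
      rw [adWord_concat, this, adWord_zero]
      exact M.zero_mem
  have : x ∈ J := hxJ
  rw [hJbot] at this
  simpa using this
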